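/- For all nonnegative integers t and all n ≥ 0, the number of overpartition t-tuples satisfies p̄_t(4n+2) ≡ 0 (mod 4). -/

import Mathlib

/-- The number of overpartitions of `n`: a partition of `n` together with a
choice of which distinct part values are overlined (the first occurrence of a
part value may be overlined), so that the count is `∑_{λ ⊢ n} 2^{#distinct parts of λ}`. -/
def overpartitionCount (n : ℕ) : ℕ :=
  ∑ p : n.Partition, 2 ^ p.parts.toFinset.card

/-- The number of overpartition `t`-tuples of `n`: `t`-tuples of overpartitions
whose sizes sum to `n`. -/
def overpartitionTuples (t n : ℕ) : ℕ :=
  ∑ c ∈ Finset.Nat.antidiagonalTuple t n, ∏ i, overpartitionCount (c i)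

lemma opc_zero : overpartitionCount 0 = 1 := by
  rw [overpartitionCount, Fintype.sum_unique]
  simp

lemma opc_even {m : ℕ} (hm : m ≠ 0) : 2 ∣ overpartitionCount m := by
  refine Finset.dvd_sum fun p _ => ?_
  have h : p.parts.toFinset.card ≠ 0 := by
    simp only [ne_eq, Finset.card_eq_zero, Multiset.toFinset_eq_empty]
    intro h0
    exact hm (by simpa [h0] using p.parts_sum.symm)
  exact dvd_pow_self 2 h

/-- The partition of `N` all of whose parts equal the divisor `d`. -/
def repPartition (N d : ℕ) (hd : d ∈ N.divisors) : N.Partition where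
  parts := Multiset.replicate (N / d) d
  parts_pos hi := by
    rw [Multiset.eq_of_mem_replicate hi]; exact Nat.pos_of_mem_divisors hd
  parts_sum := by
    rw [Multiset.sum_replicate, smul_eq_mul,
      Nat.div_mul_cancel (Nat.dvd_of_mem_divisors hd)]

lemma card_single_distinct (N : ℕ) (hN : N ≠ 0) :
    (Finset.univ.filter fun p : N.Partition => p.parts.toFinset.card = 1).card
      = N.divisors.card := by
  have hk : ∀ d ∈ N.divisors, N / d ≠ 0 := by
    intro d hd h
    have := Nat.div_mul_cancel (Nat.dvd_of_mem_divisors hd)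
    rw [h] at this; simp at this; exact hN this.symm
  symm
  refine Finset.card_bij (fun d hd => repPartition N d hd) ?_ ?_ ?_
  · intro d hd
    simp only [Finset.mem_filter, Finset.mem_univ, true_and, repPartition]
    rw [Multiset.toFinset_replicate, if_neg (hk d hd)]
    simp
  · intro d₁ h₁ d₂ h₂ heq
    have hP : Multiset.replicate (N / d₁) d₁ = Multiset.replicate (N / d₂) d₂ :=
      congrArg Nat.Partition.parts heq
    have : d₁ ∈ Multiset.replicate (N / d₂) d₂ := by
      rw [← hP]; exact Multiset.mem_replicate.2 ⟨hk d₁ h₁, rfl⟩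
    exact Multiset.eq_of_mem_replicate this
  · intro p hp
    simp only [Finset.mem_filter, Finset.mem_univ, true_and] at hp
    obtain ⟨d, hd⟩ := Finset.card_eq_one.1 hp
    have hall : ∀ b ∈ p.parts, b = d := by
      intro b hb
      have : b ∈ p.parts.toFinset := Multiset.mem_toFinset.2 hb
      rw [hd] at this; simpa using this
    have hrep : p.parts = Multiset.replicate p.parts.card d :=
      Multiset.eq_replicate_card.2 hall
    have hdmem : d ∈ p.parts := by
      have : d ∈ p.parts.toFinset := by rw [hd]; simp
      exact Multiset.mem_toFinset.1 this
    have hsum : p.parts.card * d = N := by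
      have := p.parts_sum
      rwa [hrep, Multiset.sum_replicate, smul_eq_mul] at this
    have hdvd : d ∣ N := Dvd.intro_left _ hsum
    have hdpos : 0 < d := p.parts_pos hdmem
    have hdmem' : d ∈ N.divisors := Nat.mem_divisors.2 ⟨hdvd, hN⟩
    refine ⟨d, hdmem', ?_⟩
    apply Nat.Partition.ext
    show Multiset.replicate (N / d) d = p.parts
    rw [hrep]
    congr 1
    exact Nat.div_eq_of_eq_mul_left hdpos hsum.symm

lemma even_card_divisors (n : ℕ) : 2 ∣ (4 * n + 2).divisors.card := by
  have h : 4 * n + 2 = 2 * (2 * n + 1) := by ring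
  have hcop : Nat.Coprime 2 (2 * n + 1) :=
    (Nat.Prime.coprime_iff_not_dvd Nat.prime_two).2 (by omega)
  rw [h, hcop.card_divisors_mul]
  have h2 : (2 : ℕ).divisors.card = 2 := by decide
  rw [h2]
  exact Dvd.intro _ rfl

lemma opc_four_dvd (n : ℕ) : 4 ∣ overpartitionCount (4 * n + 2) := by
  set N := 4 * n + 2 with hNdef
  have hN : N ≠ 0 := by omega
  rw [overpartitionCount,
    ← Finset.sum_filter_add_sum_filter_not Finset.univ
      (fun p : N.Partition => p.parts.toFinset.card = 1)]
  refine Nat.dvd_add ?_ ?_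
  · have heq : (∑ p ∈ Finset.univ.filter
          (fun p : N.Partition => p.parts.toFinset.card = 1),
          2 ^ p.parts.toFinset.card)
        = ∑ _p ∈ Finset.univ.filter
          (fun p : N.Partition => p.parts.toFinset.card = 1), 2 ^ 1 :=
      Finset.sum_congr rfl fun p hp => by rw [(Finset.mem_filter.1 hp).2]
    rw [heq, Finset.sum_const, card_single_distinct N hN]
    obtain ⟨k, hk⟩ := even_card_divisors n
    rw [hNdef] at *
    rw [hk]
    simp only [smul_eq_mul, pow_one]
    exact ⟨k, by ring⟩
  · refine Finset.dvd_sum fun p hp => ?_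
    simp only [Finset.mem_filter, Finset.mem_univ, true_and] at hp
    have h0 : p.parts.toFinset.card ≠ 0 := by
      simp only [ne_eq, Finset.card_eq_zero, Multiset.toFinset_eq_empty]
      intro h0
      exact hN (by simpa [h0] using p.parts_sum.symm)
    have h2 : 2 ≤ p.parts.toFinset.card := by omega
    calc (4 : ℕ) = 2 ^ 2 := by norm_num
    _ ∣ 2 ^ p.parts.toFinset.card := pow_dvd_pow 2 h2

lemma tuples_zero (t : ℕ) : overpartitionTuples t 0 = 1 := by
  rw [overpartitionTuples, Finset.Nat.antidiagonalTuple_zero_right]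
  simp [opc_zero]

lemma conv (f : ℕ → ℕ) (t N : ℕ) :
    ∑ c ∈ Finset.Nat.antidiagonalTuple (t + 1) N, ∏ i, f (c i)
      = ∑ k ∈ Finset.range (N + 1),
          f k * ∑ c ∈ Finset.Nat.antidiagonalTuple t (N - k), ∏ i, f (c i) := by
  rw [← Finset.Nat.sum_antidiagonal_eq_sum_range_succ
    (fun a b => f a * ∑ c ∈ Finset.Nat.antidiagonalTuple t b, ∏ i, f (c i))]
  simp_rw [Finset.mul_sum]
  rw [Finset.sum_sigma']
  refine Finset.sum_bij'
    (fun (c : Fin (t+1) → ℕ) _ =>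
      (⟨(c 0, ∑ i : Fin t, c i.succ), Fin.tail c⟩ : (_ : ℕ × ℕ) × (Fin t → ℕ)))
    (fun x _ => Fin.cons x.1.1 x.2) ?_ ?_ ?_ ?_ ?_
  · intro c hc
    simp only [Finset.Nat.mem_antidiagonalTuple] at hc
    simp only [Finset.mem_sigma, Finset.HasAntidiagonal.mem_antidiagonal,
      Finset.Nat.mem_antidiagonalTuple]
    exact ⟨by rw [← hc, Fin.sum_univ_succ], rfl⟩
  · rintro ⟨⟨a, b⟩, c⟩ hx
    simp only [Finset.mem_sigma, Finset.HasAntidiagonal.mem_antidiagonal,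
      Finset.Nat.mem_antidiagonalTuple] at hx ⊢
    rw [Fin.sum_cons, hx.2, hx.1]
  · intro c hc
    exact Fin.cons_self_tail c
  · rintro ⟨⟨a, b⟩, c⟩ hx
    simp only [Finset.mem_sigma, Finset.HasAntidiagonal.mem_antidiagonal,
      Finset.Nat.mem_antidiagonalTuple] at hx
    simp only [Fin.cons_zero, Fin.tail_cons]
    obtain ⟨h1, h2⟩ := hx
    simp [Fin.cons_succ, h2]
  · intro c hc
    have : ∏ i, f (c i) = f (c 0) * ∏ i : Fin t, f (Fin.tail c i) := by
      rw [Fin.prod_univ_succ]; rfl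
    exact this

lemma tuples_key : ∀ t N, N ≠ 0 →
    (overpartitionTuples t N : ZMod 4) = t * overpartitionCount N := by
  intro t
  induction t with
  | zero =>
    intro N hN
    obtain ⟨M, rfl⟩ : ∃ M, N = M + 1 := ⟨N - 1, by omega⟩
    rw [overpartitionTuples, Finset.Nat.antidiagonalTuple_zero_succ]
    simp
  | succ t ih =>
    intro N hN
    obtain ⟨M, rfl⟩ : ∃ M, N = M + 1 := ⟨N - 1, by omega⟩
    rw [overpartitionTuples, conv]
    have hrw : ∀ k, (∑ c ∈ Finset.Nat.antidiagonalTuple t (M + 1 - k),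
        ∏ i, overpartitionCount (c i)) = overpartitionTuples t (M + 1 - k) :=
      fun k => rfl
    simp_rw [hrw]
    push_cast
    rw [Finset.sum_range_succ, Finset.sum_range_succ']
    have hzero : ∀ i ∈ Finset.range M,
        ((overpartitionCount (i + 1) : ZMod 4)
          * (overpartitionTuples t (M + 1 - (i + 1)) : ZMod 4)) = 0 := by
      intro i hi
      have hiM : i < M := Finset.mem_range.1 hi
      have hb : M + 1 - (i + 1) ≠ 0 := by omega
      rw [ih _ hb, ← mul_assoc, mul_comm ((overpartitionCount (i+1) : ZMod 4)) (t : ZMod 4),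
        mul_assoc, ← Nat.cast_mul]
      have h4 : (4 : ℕ) ∣ overpartitionCount (i + 1)
          * overpartitionCount (M + 1 - (i + 1)) := by
        obtain ⟨x, hx⟩ := opc_even (show i + 1 ≠ 0 by omega)
        obtain ⟨y, hy⟩ := opc_even hb
        exact ⟨x * y, by rw [hx, hy]; ring⟩
      rw [(ZMod.natCast_eq_zero_iff _ 4).2 h4, mul_zero]
    rw [Finset.sum_congr rfl hzero, Finset.sum_const, smul_zero, zero_add]
    have hsub : M + 1 - 0 = M + 1 := rfl
    rw [hsub, ih _ hN, Nat.sub_self, tuples_zero, opc_zero]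
    push_cast
    ring

theorem overpartitionTuples_four_n_two_mod_four (t n : ℕ) :
    overpartitionTuples t (4 * n + 2) ≡ 0 [MOD 4] := by
  have hN : 4 * n + 2 ≠ 0 := by omega
  have h := tuples_key t (4 * n + 2) hN
  rw [(ZMod.natCast_eq_zero_iff _ 4).2 (opc_four_dvd n), mul_zero] at h
  have h4 : (4 : ℕ) ∣ overpartitionTuples t (4 * n + 2) :=
    (ZMod.natCast_eq_zero_iff _ 4).1 h
  exact (Nat.modEq_zero_iff_dvd).2 h4
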